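/- If S is a Gallai-Edmonds set of a finite graph G and v is any vertex of an odd S-component, then there exists a maximum matching of G leaving v exposed. -/

import Mathlib

open SimpleGraph Set

variable {V : Type*} [Fintype V] [DecidableEq V]

/-- The vertex set (in `V`) of a connected component of the graph induced on `B`. -/
def compSupp (G : SimpleGraph V) (B : Set V)
    (c : (G.induce B).ConnectedComponent) : Set V :=
  Subtype.val '' c.supp

/-- `A` is (the vertex set of) a connected component of `G` restricted to `B`. -/
def IsCompOf (G : SimpleGraph V) (B : Set V) (A : Set V) : Prop :=
  ∃ c : (G.induce B).ConnectedComponent, A = compSupp G B c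

/-- The number of odd connected components of `G` restricted to `B`. -/
noncomputable def oddComps (G : SimpleGraph V) (B : Set V) : ℕ :=
  Set.ncard {c : (G.induce B).ConnectedComponent | Odd (compSupp G B c).ncard}

/-- The deficiency `df(S) = od(S) - |S|`. -/
noncomputable def df (G : SimpleGraph V) (S : Set V) : ℤ :=
  (oddComps G Sᶜ : ℤ) - S.ncard

/-- The induced subgraph on `A` has a perfect matching. -/
def HasPM (G : SimpleGraph V) (A : Set V) : Prop :=
  ∃ M : Subgraph (G.induce A), M.IsPerfectMatching

/-- `Df(S)`: total number of vertices in components of `G - S` with no perfect matching. -/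
noncomputable def Df (G : SimpleGraph V) (S : Set V) : ℕ :=
  Set.ncard (⋃ c ∈ {c : (G.induce Sᶜ).ConnectedComponent |
    ¬ HasPM G (compSupp G Sᶜ c)}, compSupp G Sᶜ c)

/-- The set of `M`-exposed vertices. -/
def exposed (G : SimpleGraph V) (M : Subgraph G) : Set V :=
  {v | v ∉ M.support}

/-- `A` induces a factor-critical graph. -/
def FactorCritical (G : SimpleGraph V) (A : Set V) : Prop :=
  ∀ v ∈ A, HasPM G (A \ {v})

/-- The neighborhood of `T ⊆ S` in the bipartite minor `⟨G,S⟩`: the odd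
`S`-components adjacent to some vertex of `T`. -/
def minorNbhd (G : SimpleGraph V) (S T : Set V) :
    Set (G.induce Sᶜ).ConnectedComponent :=
  {c | Odd (compSupp G Sᶜ c).ncard ∧ ∃ u ∈ T, ∃ w ∈ compSupp G Sᶜ c, G.Adj u w}

/-- `S` is a Gallai-Edmonds set of `G`. -/
def GallaiEdmonds (G : SimpleGraph V) (S : Set V) : Prop :=
  (∀ c : (G.induce Sᶜ).ConnectedComponent,
      Even (compSupp G Sᶜ c).ncard → HasPM G (compSupp G Sᶜ c)) ∧
  (∀ c : (G.induce Sᶜ).ConnectedComponent,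
      Odd (compSupp G Sᶜ c).ncard → FactorCritical G (compSupp G Sᶜ c)) ∧
  (∀ T ⊆ S, T.Nonempty → T.ncard + 1 ≤ (minorNbhd G S T).ncard)

/-- `w` and `w'` lie in the same `S`-component. -/
def SameComp (G : SimpleGraph V) (S : Set V) (w w' : V) : Prop :=
  ∃ c : (G.induce Sᶜ).ConnectedComponent,
    w ∈ compSupp G Sᶜ c ∧ w' ∈ compSupp G Sᶜ c

/-- `M` is a maximum matching of `G`. -/
def IsMaximumMatching (G : SimpleGraph V) (M : Subgraph G) : Prop :=
  M.IsMatching ∧ ∀ M' : Subgraph G, M'.IsMatching →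
    M'.edgeSet.ncard ≤ M.edgeSet.ncard

section AuxGE

set_option linter.unusedSectionVars false
set_option maxHeartbeats 1000000

lemma AuxGE.mem_compSupp {G : SimpleGraph V} {B : Set V} {c : (G.induce B).ConnectedComponent}
    {x : V} : x ∈ compSupp G B c ↔ ∃ hx : x ∈ B, (G.induce B).connectedComponentMk ⟨x, hx⟩ = c := by
  constructor
  · rintro ⟨⟨y, hy⟩, hsupp, rfl⟩
    exact ⟨hy, hsupp⟩
  · rintro ⟨hx, hc⟩
    exact ⟨⟨x, hx⟩, hc, rfl⟩

lemma AuxGE.compSupp_subset (G : SimpleGraph V) (B : Set V)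
    (c : (G.induce B).ConnectedComponent) : compSupp G B c ⊆ B := by
  rintro x ⟨⟨y, hy⟩, _, rfl⟩; exact hy

lemma AuxGE.compSupp_nonempty (G : SimpleGraph V) (B : Set V)
    (c : (G.induce B).ConnectedComponent) : (compSupp G B c).Nonempty := by
  obtain ⟨⟨x, hx⟩, hc⟩ := c.exists_rep
  exact ⟨x, AuxGE.mem_compSupp.2 ⟨hx, hc⟩⟩

lemma AuxGE.compSupp_disjoint {G : SimpleGraph V} {B : Set V}
    {c c' : (G.induce B).ConnectedComponent} (h : c ≠ c') :
    Disjoint (compSupp G B c) (compSupp G B c') := by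
  rw [Set.disjoint_left]
  rintro x hx hx'
  obtain ⟨h1, h2⟩ := AuxGE.mem_compSupp.1 hx
  obtain ⟨h1', h2'⟩ := AuxGE.mem_compSupp.1 hx'
  exact h (h2 ▸ h2' ▸ rfl)

lemma AuxGE.adj_mem_compSupp {G : SimpleGraph V} {B : Set V}
    {c : (G.induce B).ConnectedComponent}
    {x y : V} (hx : x ∈ compSupp G B c) (hy : y ∈ B) (hadj : G.Adj x y) :
    y ∈ compSupp G B c := by
  obtain ⟨hxB, hc⟩ := AuxGE.mem_compSupp.1 hx
  refine AuxGE.mem_compSupp.2 ⟨hy, ?_⟩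
  rw [← hc]
  exact ConnectedComponent.connectedComponentMk_eq_of_adj hadj.symm

/-- The inclusion homomorphism from an induced subgraph. -/
def AuxGE.incHom (G : SimpleGraph V) (A : Set V) : G.induce A →g G where
  toFun := Subtype.val
  map_rel' := fun h => h

lemma AuxGE.hasPM_global {G : SimpleGraph V} {A : Set V} (h : HasPM G A) :
    ∃ M : Subgraph G, M.IsMatching ∧ M.verts = A := by
  obtain ⟨M, hM⟩ := h
  refine ⟨M.map (AuxGE.incHom G A), hM.1.map (AuxGE.incHom G A) Subtype.val_injective, ?_⟩
  rw [Subgraph.map_verts]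
  have h2 : M.verts = Set.univ := Set.eq_univ_of_forall hM.2
  rw [h2]
  ext x
  constructor
  · rintro ⟨⟨a, ha⟩, -, rfl⟩; exact ha
  · intro hx; exact ⟨⟨x, hx⟩, trivial, rfl⟩

lemma AuxGE.two_mul_ncard_edgeSet {G : SimpleGraph V} {M : Subgraph G}
    (hM : M.IsMatching) : M.verts.ncard = 2 * M.edgeSet.ncard := by
  classical
  set p : V → V := fun x => if h : x ∈ M.verts then (hM h).choose else x with hp
  have hadj : ∀ x (h : x ∈ M.verts), M.Adj x (p x) := by
    intro x h; simp only [hp, dif_pos h]; exact (hM h).choose_spec.1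
  have huniq : ∀ x (h : x ∈ M.verts) (y : V), M.Adj x y → y = p x := by
    intro x h y hy; simp only [hp, dif_pos h]; exact (hM h).choose_spec.2 y hy
  set fib : V → Sym2 V := fun x => s(x, p x) with hfib
  rw [Set.ncard_eq_toFinset_card', Set.ncard_eq_toFinset_card']
  rw [Finset.card_eq_sum_card_fiberwise (f := fib) (t := M.edgeSet.toFinset)
    (fun x hx => by
      rw [Finset.mem_coe, Set.mem_toFinset] at hx ⊢
      exact Subgraph.mem_edgeSet.2 (hadj x hx))]
  rw [Finset.sum_congr rfl (g := fun _ => 2), Finset.sum_const, smul_eq_mul, mul_comm]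
  intro e he
  rw [Set.mem_toFinset] at he
  induction e using Sym2.ind with
  | _ x y =>
    have hxy : M.Adj x y := Subgraph.mem_edgeSet.1 he
    have hne : x ≠ y := hxy.ne
    have : M.verts.toFinset.filter (fun z => fib z = s(x, y)) = {x, y} := by
      ext z
      simp only [Finset.mem_filter, Set.mem_toFinset, Finset.mem_insert, Finset.mem_singleton]
      constructor
      · rintro ⟨hz, hfz⟩
        rw [hfib] at hfz
        rw [Sym2.eq_iff] at hfz
        rcases hfz with ⟨rfl, _⟩ | ⟨rfl, _⟩
        · exact Or.inl rfl
        · exact Or.inr rfl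
      · rintro (rfl | rfl)
        · have hz : z ∈ M.verts := M.edge_vert hxy
          refine ⟨hz, ?_⟩
          show s(z, p z) = s(z, y)
          rw [← huniq z hz y hxy]
        · have hz : z ∈ M.verts := M.edge_vert hxy.symm
          refine ⟨hz, ?_⟩
          show s(z, p z) = s(x, z)
          rw [← huniq z hz x hxy.symm]
          exact Sym2.eq_swap
    rw [this, Finset.card_insert_of_notMem (by simpa using hne), Finset.card_singleton]

lemma AuxGE.matching_even {G : SimpleGraph V} {M : Subgraph G} (hM : M.IsMatching) :
    Even M.verts.ncard :=
  ⟨M.edgeSet.ncard, by rw [AuxGE.two_mul_ncard_edgeSet hM]; ring⟩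

lemma AuxGE.odd_comp_exposed_or_S {G : SimpleGraph V} {S : Set V} {M' : Subgraph G}
    (hM' : M'.IsMatching) (c : (G.induce Sᶜ).ConnectedComponent)
    (hodd : Odd (compSupp G Sᶜ c).ncard) :
    (∃ x ∈ compSupp G Sᶜ c, x ∉ M'.verts) ∨
    (∃ y ∈ S, ∃ x ∈ compSupp G Sᶜ c, M'.Adj x y) := by
  by_contra hcon
  push_neg at hcon
  obtain ⟨h1, h2⟩ := hcon
  set C := compSupp G Sᶜ c with hC
  have hpartner : ∀ x ∈ C, ∀ y, M'.Adj x y → y ∈ C := by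
    intro x hx y hxy
    have hyS : y ∉ S := fun hy => h2 y hy x hx hxy
    exact AuxGE.adj_mem_compSupp hx hyS (M'.adj_sub hxy)
  have hmat : (M'.induce C).IsMatching := by
    intro x hx
    rw [Subgraph.induce_verts] at hx
    obtain ⟨y, hy, hyu⟩ := hM' (h1 x hx)
    refine ⟨y, ⟨hx, hpartner x hx y hy, hy⟩, ?_⟩
    rintro z ⟨_, _, hz⟩
    exact hyu z hz
  have := AuxGE.matching_even hmat
  rw [Subgraph.induce_verts] at this
  exact (Nat.not_even_iff_odd.2 hodd) this

lemma AuxGE.hall_injection {G : SimpleGraph V} {S : Set V}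
    (hHall : ∀ T ⊆ S, T.Nonempty → T.ncard + 1 ≤ (minorNbhd G S T).ncard)
    (c₀ : (G.induce Sᶜ).ConnectedComponent) :
    ∃ f : S → (G.induce Sᶜ).ConnectedComponent, Function.Injective f ∧
      ∀ s : S, Odd (compSupp G Sᶜ (f s)).ncard ∧ f s ≠ c₀ ∧
        ∃ w ∈ compSupp G Sᶜ (f s), G.Adj ↑s w := by
  classical
  haveI : Finite (G.induce Sᶜ).ConnectedComponent := Quot.finite _
  set t : S → Finset (G.induce Sᶜ).ConnectedComponent := fun s =>
    Set.Finite.toFinset (Set.toFinite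
      {c : (G.induce Sᶜ).ConnectedComponent |
        Odd (compSupp G Sᶜ c).ncard ∧ c ≠ c₀ ∧ ∃ w ∈ compSupp G Sᶜ c, G.Adj ↑s w})
    with ht
  have hmem : ∀ (s : S) (c : (G.induce Sᶜ).ConnectedComponent), c ∈ t s ↔
      Odd (compSupp G Sᶜ c).ncard ∧ c ≠ c₀ ∧ ∃ w ∈ compSupp G Sᶜ c, G.Adj ↑s w := by
    intro s c
    rw [ht]
    exact Set.Finite.mem_toFinset _
  have hall : ∀ Ts : Finset S, Ts.card ≤ (Ts.biUnion t).card := by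
    intro Ts
    rcases Ts.eq_empty_or_nonempty with rfl | hne
    · simp
    set T : Set V := Subtype.val '' (Ts : Set S) with hT
    have hTS : T ⊆ S := by rintro x ⟨⟨a, ha⟩, _, rfl⟩; exact ha
    have hTne : T.Nonempty := hne.to_set.image _
    have key := hHall T hTS hTne
    have hsub : minorNbhd G S T ⊆ insert c₀ ↑(Ts.biUnion t) := by
      rintro c ⟨hcodd, u, hu, w, hw, hadj⟩
      obtain ⟨s, hs, rfl⟩ := hu
      by_cases hc : c = c₀
      · exact hc ▸ Set.mem_insert _ _
      · refine Set.mem_insert_iff.2 (Or.inr ?_)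
        exact Finset.mem_coe.2
          (Finset.mem_biUnion.2 ⟨s, hs, (hmem s c).2 ⟨hcodd, hc, w, hw, hadj⟩⟩)
    have h1 : (minorNbhd G S T).ncard ≤ (Ts.biUnion t).card + 1 := by
      calc (minorNbhd G S T).ncard
          ≤ (insert c₀ (↑(Ts.biUnion t) :
              Set (G.induce Sᶜ).ConnectedComponent)).ncard :=
            Set.ncard_le_ncard hsub (Set.toFinite _)
        _ ≤ (↑(Ts.biUnion t) : Set (G.induce Sᶜ).ConnectedComponent).ncard + 1 :=
            Set.ncard_insert_le _ _
        _ = (Ts.biUnion t).card + 1 := by rw [Set.ncard_coe_finset]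
    have h2 : T.ncard = Ts.card := by
      rw [hT, Set.ncard_image_of_injective _ Subtype.val_injective, Set.ncard_coe_finset]
    omega
  obtain ⟨f, hfinj, hf⟩ := (Finset.all_card_le_biUnion_card_iff_exists_injective t).1 hall
  exact ⟨f, hfinj, fun s => (hmem s (f s)).1 (hf s)⟩

end AuxGE

set_option maxHeartbeats 2000000 in
/-- If `S` is Gallai-Edmonds and `v` lies in an odd `S`-component, then some
maximum matching of `G` leaves `v` exposed. -/
theorem stmt_9 (G : SimpleGraph V) (S A : Set V) (v : V)
    (h : GallaiEdmonds G S) (hC : IsCompOf G Sᶜ A) (hodd : Odd A.ncard)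
    (hv : v ∈ A) :
    ∃ M : Subgraph G, IsMaximumMatching G M ∧ v ∈ exposed G M := by
  classical
  obtain ⟨hEven, hOdd, hHall⟩ := h
  obtain ⟨c₀, rfl⟩ := hC
  haveI : Finite (G.induce Sᶜ).ConnectedComponent := Quot.finite _
  -- Hall injection from S into odd components avoiding c₀
  obtain ⟨f, hfinj, hf⟩ := AuxGE.hall_injection hHall c₀
  have hfodd : ∀ s, Odd (compSupp G Sᶜ (f s)).ncard := fun s => (hf s).1
  have hfne : ∀ s, f s ≠ c₀ := fun s => (hf s).2.1
  choose w hw1 hw2 using fun s => (hf s).2.2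
  -- pick a vertex in every component
  have hne : ∀ c, (compSupp G Sᶜ c).Nonempty := AuxGE.compSupp_nonempty G Sᶜ
  set pick : (G.induce Sᶜ).ConnectedComponent → V := fun c => (hne c).some with hpickdef
  have hpick : ∀ c, pick c ∈ compSupp G Sᶜ c := fun c => (hne c).some_mem
  -- deleted (exposed) vertices in each component
  set del : (G.induce Sᶜ).ConnectedComponent → Set V := fun c =>
    if c = c₀ then {v}
    else if Odd (compSupp G Sᶜ c).ncard ∧ c ∉ Set.range f then {pick c} else ∅
    with hdeldef
  have hdel_sub : ∀ c, del c ⊆ compSupp G Sᶜ c := by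
    intro c
    simp only [hdeldef]
    split_ifs with h1 h2
    · subst h1; exact Set.singleton_subset_iff.2 hv
    · exact Set.singleton_subset_iff.2 (hpick c)
    · exact Set.empty_subset _
  have hdelc₀ : del c₀ = {v} := by rw [hdeldef]; simp
  -- the per-component matchings
  have key : ∀ c : (G.induce Sᶜ).ConnectedComponent, ∃ N : Subgraph G, N.IsMatching ∧
      N.verts = (compSupp G Sᶜ c \ del c) ∪ (Subtype.val '' (f ⁻¹' {c})) := by
    intro c
    by_cases hc : c = c₀
    · subst hc
      have hpre : f ⁻¹' {c} = ∅ := by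
        ext s; simp only [Set.mem_preimage, Set.mem_singleton_iff, Set.mem_empty_iff_false,
          iff_false]
        exact hfne s
      obtain ⟨N, hN, hNv⟩ := AuxGE.hasPM_global (hOdd c hodd v hv)
      refine ⟨N, hN, ?_⟩
      rw [hNv, hdelc₀, hpre]
      simp
    · by_cases hcr : c ∈ Set.range f
      · obtain ⟨s₀, rfl⟩ := hcr
        have hdelc : del (f s₀) = ∅ := by
          rw [hdeldef]
          simp only [if_neg hc]
          rw [if_neg]
          rintro ⟨-, hnr⟩
          exact hnr ⟨s₀, rfl⟩
        have hpre : f ⁻¹' {f s₀} = {s₀} := by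
          ext s; simp only [Set.mem_preimage, Set.mem_singleton_iff]
          exact ⟨fun hh => hfinj hh, fun hh => hh ▸ rfl⟩
        obtain ⟨N₁, hN₁, hN₁v⟩ :=
          AuxGE.hasPM_global (hOdd (f s₀) (hfodd s₀) (w s₀) (hw1 s₀))
        set N₂ := G.subgraphOfAdj (hw2 s₀) with hN₂def
        have hN₂ : N₂.IsMatching := Subgraph.IsMatching.subgraphOfAdj _
        have hdisj : Disjoint N₁.support N₂.support := by
          rw [hN₁.support_eq_verts, hN₂.support_eq_verts, hN₁v, hN₂def, subgraphOfAdj_verts,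
            Set.disjoint_left]
          rintro x ⟨hx1, hx2⟩ (rfl | rfl)
          · exact (AuxGE.compSupp_subset G Sᶜ (f s₀) hx1) (Subtype.coe_prop s₀)
          · exact hx2 rfl
        refine ⟨N₁ ⊔ N₂, hN₁.sup hN₂ hdisj, ?_⟩
        rw [Subgraph.verts_sup, hN₁v, hN₂def, subgraphOfAdj_verts, hdelc, hpre]
        have hwmem := hw1 s₀
        ext x
        simp only [Set.mem_union, Set.mem_diff, Set.mem_insert_iff, Set.mem_singleton_iff,
          Set.image_singleton, Set.diff_empty]
        constructor
        · rintro (⟨hx, -⟩ | (rfl | rfl))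
          · exact Or.inl hx
          · exact Or.inr rfl
          · exact Or.inl hwmem
        · rintro (hx | rfl)
          · by_cases hxw : x = w s₀
            · exact Or.inr (Or.inr hxw)
            · exact Or.inl ⟨hx, hxw⟩
          · exact Or.inr (Or.inl rfl)
      · have hpre : f ⁻¹' {c} = ∅ := by
          ext s; simp only [Set.mem_preimage, Set.mem_singleton_iff, Set.mem_empty_iff_false,
            iff_false]
          exact fun hh => hcr ⟨s, hh⟩
        by_cases hcodd : Odd (compSupp G Sᶜ c).ncard
        · have hdelc : del c = {pick c} := by
            rw [hdeldef]; simp only [if_neg hc]; rw [if_pos ⟨hcodd, hcr⟩]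
          obtain ⟨N, hN, hNv⟩ := AuxGE.hasPM_global (hOdd c hcodd (pick c) (hpick c))
          refine ⟨N, hN, ?_⟩
          rw [hNv, hdelc, hpre]
          simp
        · have hdelc : del c = ∅ := by
            rw [hdeldef]; simp only [if_neg hc]; rw [if_neg]
            rintro ⟨h1, -⟩; exact hcodd h1
          obtain ⟨N, hN, hNv⟩ :=
            AuxGE.hasPM_global (hEven c (Nat.not_odd_iff_even.1 hcodd))
          refine ⟨N, hN, ?_⟩
          rw [hNv, hdelc, hpre]
          simp
  choose Mc hMc1 hMc2 using key
  set M := ⨆ c, Mc c with hMdef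
  -- pairwise disjointness of the pieces
  have hdisj : ∀ c c', c ≠ c' → Disjoint (Mc c).verts (Mc c').verts := by
    intro c c' hcc'
    rw [hMc2 c, hMc2 c', Set.disjoint_left]
    rintro x (⟨hx1, -⟩ | ⟨s, hs, rfl⟩) hx'
    · rcases hx' with ⟨hx'1, -⟩ | ⟨s', hs', rfl⟩
      · exact (Set.disjoint_left.1 (AuxGE.compSupp_disjoint hcc')) hx1 hx'1
      · exact (AuxGE.compSupp_subset G Sᶜ c hx1) (Subtype.coe_prop s')
    · rcases hx' with ⟨hx'1, -⟩ | ⟨s', hs', hss⟩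
      · exact (AuxGE.compSupp_subset G Sᶜ c' hx'1) (Subtype.coe_prop s)
      · apply hcc'
        have hss' : s = s' := Subtype.val_injective hss.symm
        rw [Set.mem_preimage, Set.mem_singleton_iff] at hs hs'
        rw [← hs, ← hs', hss']
  have hMmat : M.IsMatching := by
    apply Subgraph.IsMatching.iSup hMc1
    intro c c' hcc'
    rw [(hMc1 c).support_eq_verts, (hMc1 c').support_eq_verts]
    exact hdisj c c' hcc'
  -- compute the vertex set of M
  set D : Set V := ⋃ c, del c with hDdef
  have hDS : D ⊆ Sᶜ := by
    rw [hDdef]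
    exact Set.iUnion_subset fun c => (hdel_sub c).trans (AuxGE.compSupp_subset G Sᶜ c)
  have hMverts : M.verts = Dᶜ := by
    rw [hMdef, Subgraph.verts_iSup]
    ext x
    simp only [Set.mem_iUnion, Set.mem_compl_iff]
    constructor
    · rintro ⟨c, hx⟩ hxD
      rw [hMc2 c] at hx
      obtain ⟨c', hxc'⟩ := Set.mem_iUnion.1 (hDdef ▸ hxD)
      rcases hx with ⟨hx1, hx2⟩ | ⟨s, -, rfl⟩
      · by_cases hcc' : c = c'
        · exact hx2 (hcc' ▸ hxc')
        · exact (Set.disjoint_left.1 (AuxGE.compSupp_disjoint hcc')) hx1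
            (hdel_sub c' hxc')
      · exact (hDS hxD) (Subtype.coe_prop s)
    · intro hxD
      by_cases hxS : x ∈ S
      · refine ⟨f ⟨x, hxS⟩, ?_⟩
        rw [hMc2]
        exact Or.inr ⟨⟨x, hxS⟩, rfl, rfl⟩
      · refine ⟨(G.induce Sᶜ).connectedComponentMk ⟨x, hxS⟩, ?_⟩
        rw [hMc2]
        refine Or.inl ⟨AuxGE.mem_compSupp.2 ⟨hxS, rfl⟩, fun hdel => hxD ?_⟩
        rw [hDdef]
        exact Set.mem_iUnion.2 ⟨_, hdel⟩
  have hvD : v ∈ D := by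
    rw [hDdef]
    exact Set.mem_iUnion.2 ⟨c₀, by rw [hdelc₀]; exact rfl⟩
  -- cardinality of D
  set U : Set ((G.induce Sᶜ).ConnectedComponent) :=
    {c | Odd (compSupp G Sᶜ c).ncard ∧ c ∉ Set.range f} with hUdef
  set gfun : (G.induce Sᶜ).ConnectedComponent → V :=
    fun c => if c = c₀ then v else pick c with hgdef
  have hc₀U : c₀ ∈ U := ⟨hodd, fun ⟨s, hs⟩ => hfne s hs⟩
  have hgdel : ∀ c ∈ U, del c = {gfun c} := by
    intro c hc
    by_cases hcc : c = c₀
    · subst hcc; rw [hdelc₀, hgdef]; simp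
    · rw [hdeldef, hgdef]
      simp only [if_neg hcc]
      rw [if_pos (show Odd (compSupp G Sᶜ c).ncard ∧ c ∉ Set.range f from hc)]
  have hgcomp : ∀ c ∈ U, gfun c ∈ compSupp G Sᶜ c := by
    intro c hc
    have := hgdel c hc ▸ hdel_sub c
    exact this rfl
  have hginj : Set.InjOn gfun U := by
    intro c hc c' hc' heq
    by_contra hcc'
    exact (Set.disjoint_left.1 (AuxGE.compSupp_disjoint hcc')) (hgcomp c hc)
      (heq ▸ hgcomp c' hc')
  have hD_eq : D = gfun '' U := by
    ext x
    constructor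
    · intro hx
      obtain ⟨c, hxc⟩ := Set.mem_iUnion.1 (hDdef ▸ hx)
      by_cases hcU : c ∈ U
      · rw [hgdel c hcU] at hxc
        exact ⟨c, hcU, hxc.symm⟩
      · exfalso
        by_cases hcc : c = c₀
        · exact hcU (hcc ▸ hc₀U)
        · rw [hdeldef] at hxc
          simp only [if_neg hcc] at hxc
          rw [if_neg (show ¬(Odd (compSupp G Sᶜ c).ncard ∧ c ∉ Set.range f) from hcU)] at hxc
          exact hxc
    · rintro ⟨c, hcU, rfl⟩
      rw [hDdef]
      exact Set.mem_iUnion.2 ⟨c, by rw [hgdel c hcU]; exact rfl⟩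
  have hDcard : D.ncard = U.ncard := by
    rw [hD_eq, Set.ncard_image_of_injOn hginj]
  -- |U| + |S| = number of odd components
  set oddSet : Set ((G.induce Sᶜ).ConnectedComponent) :=
    {c | Odd (compSupp G Sᶜ c).ncard} with hoddSetdef
  have hrange_sub : Set.range f ⊆ oddSet := by
    rintro c ⟨s, rfl⟩; exact hfodd s
  have hU_eq : U = oddSet \ Set.range f := by
    ext c; simp only [hUdef, hoddSetdef, Set.mem_setOf_eq, Set.mem_diff]
  have hrange_card : (Set.range f).ncard = S.ncard := by
    rw [← Set.image_univ, Set.ncard_image_of_injective _ hfinj, Set.ncard_univ,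
      Nat.card_coe_set_eq]
  have hUcard : U.ncard + S.ncard = oddSet.ncard := by
    rw [hU_eq, ← hrange_card]
    exact Set.ncard_diff_add_ncard_of_subset hrange_sub (Set.toFinite _)
  -- the two halves of the goal
  refine ⟨M, ⟨hMmat, ?_⟩, ?_⟩
  · -- maximality
    intro M' hM'
    -- injection from odd components into exposed vertices and S
    have hj : ∀ c : (G.induce Sᶜ).ConnectedComponent, ∃ z : V,
        Odd (compSupp G Sᶜ c).ncard →
          ((z ∈ compSupp G Sᶜ c ∧ z ∉ M'.verts) ∨
           (z ∈ S ∧ ∃ x ∈ compSupp G Sᶜ c, M'.Adj x z)) := by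
      intro c
      by_cases hcodd : Odd (compSupp G Sᶜ c).ncard
      · rcases AuxGE.odd_comp_exposed_or_S hM' c hcodd with ⟨x, hx1, hx2⟩ | ⟨y, hy, hx⟩
        · exact ⟨x, fun _ => Or.inl ⟨hx1, hx2⟩⟩
        · exact ⟨y, fun _ => Or.inr ⟨hy, hx⟩⟩
      · exact ⟨v, fun hcontra => absurd hcontra hcodd⟩
    choose jfun hjfun using hj
    have hjinj : Set.InjOn jfun oddSet := by
      intro c hc c' hc' heq
      by_contra hcc'
      rcases hjfun c hc with ⟨hz1, hz2⟩ | ⟨hzS, x, hx, hadj⟩ <;>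
        rcases hjfun c' hc' with ⟨hz1', hz2'⟩ | ⟨hzS', x', hx', hadj'⟩
      · exact (Set.disjoint_left.1 (AuxGE.compSupp_disjoint hcc')) hz1 (heq ▸ hz1')
      · exact (AuxGE.compSupp_subset G Sᶜ c hz1) (heq ▸ hzS')
      · exact (AuxGE.compSupp_subset G Sᶜ c' hz1') (heq ▸ hzS)
      · have hzv : jfun c ∈ M'.verts := M'.edge_vert hadj.symm
        obtain ⟨u, hu, huu⟩ := hM' hzv
        have hxu : x = u := huu x hadj.symm
        have hxu' : x' = u := by
          apply huu
          rw [heq]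
          exact hadj'.symm
        exact (Set.disjoint_left.1 (AuxGE.compSupp_disjoint hcc')) hx
          (hxu.trans hxu'.symm ▸ hx')
    have hjsub : jfun '' oddSet ⊆ M'.vertsᶜ ∪ S := by
      rintro z ⟨c, hc, rfl⟩
      rcases hjfun c hc with ⟨-, hz2⟩ | ⟨hzS, -⟩
      · exact Or.inl hz2
      · exact Or.inr hzS
    have hcount : oddSet.ncard ≤ M'.vertsᶜ.ncard + S.ncard := by
      calc oddSet.ncard = (jfun '' oddSet).ncard :=
            (Set.ncard_image_of_injOn hjinj).symm
        _ ≤ (M'.vertsᶜ ∪ S).ncard := Set.ncard_le_ncard hjsub (Set.toFinite _)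
        _ ≤ M'.vertsᶜ.ncard + S.ncard := Set.ncard_union_le _ _
    have e1 : M'.verts.ncard + M'.vertsᶜ.ncard = Nat.card V :=
      Set.ncard_add_ncard_compl _
    have e2 : M.verts.ncard + D.ncard = Nat.card V := by
      rw [hMverts]
      rw [add_comm]
      exact Set.ncard_add_ncard_compl _
    have e3 : 2 * M'.edgeSet.ncard = M'.verts.ncard :=
      (AuxGE.two_mul_ncard_edgeSet hM').symm
    have e4 : 2 * M.edgeSet.ncard = M.verts.ncard :=
      (AuxGE.two_mul_ncard_edgeSet hMmat).symm
    omega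
  · -- v is exposed
    show v ∉ M.support
    rw [hMmat.support_eq_verts, hMverts]
    exact fun hcontra => hcontra hvD
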